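/- Let λ_1 > λ_2 > 0 > λ_3 be reals with λ_1 ∉ ℤ and λ_2 ∉ ℤ, and for k ∈ ℕ set S(k) = Σ_{i_1+i_2+i_3 = k, i_j ≥ 0} f_{λ_1}(i_1)·f_{λ_2}(i_2)·f_{λ_3}(i_3). Then: (i) if 0 ≤ k ≤ ⌈λ_2⌉, S(k) = ⌈(k+1)/2⌉; (ii) if ⌈λ_2⌉ < k ≤ ⌈λ_1⌉ and k − ⌈λ_2⌉ is even, S(k) = ⌈(k+1)/2⌉; (iii) if ⌈λ_2⌉ < k ≤ ⌈λ_1⌉ and k − ⌈λ_2⌉ is odd, S(k) = ⌈(k+1)/2⌉ − (k − ⌊λ_2⌋). -/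

import Mathlib

open scoped Classical

/-- `fsig λ k` is the coefficient of `e^{λ-2k}` in the signature character of the
Verma module `M_λ` evaluated at `s = -1`. -/
noncomputable def fsig (lam : ℝ) (k : ℤ) : ℤ :=
  if k < 0 then 0
  else if lam < 0 then (-1) ^ k.toNat
  else if k ≤ ⌊lam⌋ then 1
  else (-1) ^ (k + ⌈lam⌉).toNat

lemma sum_tuple3 {M : Type} [AddCommMonoid M] (k : ℕ) (F : ℕ → ℕ → ℕ → M) :
    ∑ x ∈ Finset.Nat.antidiagonalTuple 3 k, F (x 0) (x 1) (x 2)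
      = ∑ p ∈ Finset.HasAntidiagonal.antidiagonal k, ∑ q ∈ Finset.HasAntidiagonal.antidiagonal p.2, F q.1 p.1 q.2 := by
  rw [show (∑ p ∈ Finset.HasAntidiagonal.antidiagonal k, ∑ q ∈ Finset.HasAntidiagonal.antidiagonal p.2, F q.1 p.1 q.2)
      = ∑ x ∈ (Finset.HasAntidiagonal.antidiagonal k).sigma (fun p => Finset.HasAntidiagonal.antidiagonal p.2), F x.2.1 x.1.1 x.2.2
    from (Finset.sum_sigma _ _ (fun x : (_ : ℕ × ℕ) × ℕ × ℕ => F x.2.1 x.1.1 x.2.2)).symm]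
  refine Finset.sum_nbij' (i := fun x => ⟨(x 1, x 0 + x 2), (x 0, x 2)⟩)
    (j := fun p => ![p.2.1, p.1.1, p.2.2]) ?_ ?_ ?_ ?_ ?_
  · intro x hx
    rw [Finset.Nat.mem_antidiagonalTuple, Fin.sum_univ_three] at hx
    simp [Finset.mem_sigma, Finset.HasAntidiagonal.mem_antidiagonal]
    omega
  · intro p hp
    simp [Finset.mem_sigma, Finset.HasAntidiagonal.mem_antidiagonal] at hp
    rw [Finset.Nat.mem_antidiagonalTuple, Fin.sum_univ_three]
    simp
    omega
  · intro x hx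
    funext i
    fin_cases i <;> simp
  · intro p hp
    simp [Finset.mem_sigma, Finset.HasAntidiagonal.mem_antidiagonal] at hp
    ext <;> simp <;> omega
  · intro x hx
    simp
section helper
variable (lam : ℝ)

lemma fsig_natCast_neg (hlam : lam < 0) (i : ℕ) : fsig lam (i : ℤ) = (-1) ^ i := by
  unfold fsig
  rw [if_neg (by omega : ¬ ((i : ℤ) < 0)), if_pos hlam, Int.toNat_natCast]

lemma ceil_eq_floor_add_one (hni : ∀ n : ℤ, lam ≠ n) : ⌈lam⌉ = ⌊lam⌋ + 1 := by
  rcases lt_or_eq_of_le (Int.ceil_le_floor_add_one lam) with h | h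
  · exfalso
    have h1 : lam ≤ ⌊lam⌋ := Int.ceil_le.mp (by omega)
    have h2 : (⌊lam⌋ : ℝ) ≤ lam := Int.floor_le lam
    exact hni ⌊lam⌋ (le_antisymm h1 h2)
  · exact h

lemma fsig_natCast_pos (hlam : 0 < lam) (hni : ∀ n : ℤ, lam ≠ n) (i : ℕ) :
    fsig lam (i : ℤ) = if (i : ℤ) < ⌈lam⌉ then 1 else (-1) ^ ((i : ℤ) + ⌈lam⌉).toNat := by
  have hfc := ceil_eq_floor_add_one lam hni
  unfold fsig
  rw [if_neg (by omega : ¬ ((i : ℤ) < 0)), if_neg (by linarith)]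
  have h : ((i : ℤ) ≤ ⌊lam⌋) ↔ ((i : ℤ) < ⌈lam⌉) := by omega
  simp only [h]

lemma fsig_natCast_one (hlam : 0 < lam) (hni : ∀ n : ℤ, lam ≠ n) (i : ℕ)
    (hi : (i : ℤ) ≤ ⌈lam⌉) : fsig lam (i : ℤ) = 1 := by
  rw [fsig_natCast_pos lam hlam hni i]
  rcases lt_or_eq_of_le hi with h | h
  · rw [if_pos h]
  · rw [if_neg (by omega), h, ← two_mul]
    have hc : (0:ℤ) < ⌈lam⌉ := Int.ceil_pos.mpr hlam
    have h2 : ((2 * ⌈lam⌉).toNat) = 2 * ⌈lam⌉.toNat := by omega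
    rw [h2, pow_mul]
    norm_num

end helper

/-- The expected value of the sum. -/
def Eval (c k : ℕ) : ℤ :=
  ((k : ℤ) + 2) / 2 - (if c < k ∧ Odd (k - c) then (k : ℤ) - (c : ℤ) + 1 else 0)

lemma Aval_eq_Eval (c : ℕ) (hc : 0 < c) (f : ℕ → ℤ)
    (hf : ∀ i, f i = if i < c then 1 else (-1 : ℤ) ^ (i + c)) (k : ℕ) :
    ∑ i ∈ Finset.range (k + 1), f i * (if Even (k - i) then 1 else 0) = Eval c k := by
  induction k using Nat.strong_induction_on with
  | _ k ih =>
    match k with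
    | 0 =>
      unfold Eval
      rw [Finset.sum_range_one, hf 0, if_pos hc,
        if_neg (show ¬(c < 0 ∧ Odd (0 - c)) by rintro ⟨h', _⟩; omega)]
      norm_num
    | 1 =>
      unfold Eval
      have h1 : f 1 = 1 := by
        rw [hf 1]
        rcases Nat.lt_or_ge 1 c with h | h
        · rw [if_pos h]
        · have hc1 : c = 1 := by omega
          rw [if_neg (by omega), hc1]
          norm_num
      rw [Finset.sum_range_succ, Finset.sum_range_one, hf 0, if_pos hc, h1,
        if_neg (show ¬(c < 1 ∧ Odd (1 - c)) by rintro ⟨h', _⟩; omega)]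
      norm_num
    | (k + 2) =>
      have hsk : ∀ i ∈ Finset.range (k + 1),
          (f i * if Even (k + 2 - i) then 1 else 0) = f i * (if Even (k - i) then 1 else 0) := by
        intro i hi
        rw [Finset.mem_range] at hi
        have h' : k + 2 - i = (k - i) + 2 := by omega
        have h'' : Even (k - i + 2) ↔ Even (k - i) := by simp [Nat.even_add]
        simp only [h', h'']
      rw [Finset.sum_range_succ, Finset.sum_range_succ, Finset.sum_congr rfl hsk,
        ih k (by omega)]
      have e1 : k + 2 - (k + 1) = 1 := by omega
      have e2 : k + 2 - (k + 2) = 0 := by omega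
      rw [e1, e2, hf (k + 2)]
      have hp : (-1:ℤ) ^ (k + 2 + c) = if (k + c) % 2 = 0 then 1 else -1 := by
        rcases Nat.even_or_odd (k + c) with h | h
        · rw [if_pos (Nat.even_iff.mp h)]
          apply Even.neg_one_pow
          rcases h with ⟨m, hm⟩; exact ⟨m + 1, by omega⟩
        · rw [if_neg (by rw [Nat.odd_iff] at h; omega)]
          apply Odd.neg_one_pow
          rcases h with ⟨m, hm⟩; exact ⟨m + 1, by omega⟩
      rw [hp]
      unfold Eval
      simp only [Nat.odd_iff]
      norm_num
      push_cast
      split_ifs <;> omega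
lemma alt_sum (m : ℕ) : ∑ q ∈ Finset.HasAntidiagonal.antidiagonal m, ((-1:ℤ)) ^ q.2 = if Even m then 1 else 0 := by
  rw [Finset.Nat.sum_antidiagonal_eq_sum_range_succ_mk]
  calc ∑ i ∈ Finset.range (m+1), ((-1:ℤ))^(m-i)
      = ∑ j ∈ Finset.range (m+1), ((-1:ℤ))^j := by
        rw [← Finset.sum_range_reflect]
        refine Finset.sum_congr rfl fun i hi => ?_
        rw [Finset.mem_range] at hi
        congr 1
        omega
    _ = if Even (m+1) then 0 else 1 := neg_one_geom_sum
    _ = if Even m then 1 else 0 := by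
        rcases Nat.even_or_odd m with h | h
        · rw [if_pos h, if_neg (by simp [Nat.even_add_one, h])]
        · rw [if_neg (Nat.not_even_iff_odd.mpr h),
            if_pos (Nat.even_add_one.mpr (Nat.not_even_iff_odd.mpr h))]


/-- the value of `S(k) = Σ_{i₁+i₂+i₃=k} f_{λ₁}(i₁)f_{λ₂}(i₂)f_{λ₃}(i₃)`
for `λ₁ > λ₂ > 0 > λ₃` in the range `0 ≤ k ≤ ⌈λ₁⌉`. -/
theorem stmt_10 (lam₁ lam₂ lam₃ : ℝ) (h12 : lam₁ > lam₂) (h2 : lam₂ > 0) (h3 : 0 > lam₃)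
    (hl1 : ∀ n : ℤ, lam₁ ≠ n) (hl2 : ∀ n : ℤ, lam₂ ≠ n)
    (S : ℕ → ℤ)
    (hS : ∀ k : ℕ, S k = ∑ x ∈ Finset.Nat.antidiagonalTuple 3 k,
      fsig lam₁ (x 0) * fsig lam₂ (x 1) * fsig lam₃ (x 2)) (k : ℕ) :
    ((k : ℤ) ≤ ⌈lam₂⌉ → S k = ((k : ℤ) + 2) / 2) ∧
    (⌈lam₂⌉ < (k : ℤ) → (k : ℤ) ≤ ⌈lam₁⌉ → Even ((k : ℤ) - ⌈lam₂⌉) →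
      S k = ((k : ℤ) + 2) / 2) ∧
    (⌈lam₂⌉ < (k : ℤ) → (k : ℤ) ≤ ⌈lam₁⌉ → Odd ((k : ℤ) - ⌈lam₂⌉) →
      S k = ((k : ℤ) + 2) / 2 - ((k : ℤ) - ⌊lam₂⌋)) := by
  have h1pos : (0:ℝ) < lam₁ := lt_trans h2 h12
  have hc2 : (0:ℤ) < ⌈lam₂⌉ := Int.ceil_pos.mpr h2
  set c : ℕ := ⌈lam₂⌉.toNat with hcdef
  have hcast : (c : ℤ) = ⌈lam₂⌉ := Int.toNat_of_nonneg hc2.le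
  have hcpos : 0 < c := by omega
  have hfval : ∀ i : ℕ, fsig lam₂ (i : ℤ) = if i < c then 1 else (-1 : ℤ) ^ (i + c) := by
    intro i
    rw [fsig_natCast_pos lam₂ h2 hl2 i]
    have hcond : ((i : ℤ) < ⌈lam₂⌉) ↔ (i < c) := by omega
    have hpow : ((i : ℤ) + ⌈lam₂⌉).toNat = i + c := by omega
    simp only [hcond, hpow]
  have hceil12 : ⌈lam₂⌉ ≤ ⌈lam₁⌉ := Int.ceil_le_ceil h12.le
  have hS' : ∀ m : ℕ, (m : ℤ) ≤ ⌈lam₁⌉ → S m = Eval c m := by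
    intro m hm
    rw [hS m, sum_tuple3 m (fun a b d => fsig lam₁ (a : ℤ) * fsig lam₂ (b : ℤ) * fsig lam₃ (d : ℤ))]
    have hinner : ∀ p ∈ Finset.HasAntidiagonal.antidiagonal m,
        (∑ q ∈ Finset.HasAntidiagonal.antidiagonal p.2,
          fsig lam₁ (q.1 : ℤ) * fsig lam₂ (p.1 : ℤ) * fsig lam₃ (q.2 : ℤ))
        = fsig lam₂ (p.1 : ℤ) * (if Even p.2 then 1 else 0) := by
      intro p hp
      rw [Finset.HasAntidiagonal.mem_antidiagonal] at hp
      have hterm : ∀ q ∈ Finset.HasAntidiagonal.antidiagonal p.2,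
          fsig lam₁ (q.1 : ℤ) * fsig lam₂ (p.1 : ℤ) * fsig lam₃ (q.2 : ℤ)
          = fsig lam₂ (p.1 : ℤ) * ((-1:ℤ)) ^ q.2 := by
        intro q hq
        rw [Finset.HasAntidiagonal.mem_antidiagonal] at hq
        have hq1 : (q.1 : ℤ) ≤ ⌈lam₁⌉ := by omega
        rw [fsig_natCast_one lam₁ h1pos hl1 q.1 hq1, fsig_natCast_neg lam₃ h3 q.2]
        ring
      rw [Finset.sum_congr rfl hterm, ← Finset.mul_sum, alt_sum]
    rw [Finset.sum_congr rfl hinner, Finset.Nat.sum_antidiagonal_eq_sum_range_succ_mk,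
      ← Aval_eq_Eval c hcpos (fun i => fsig lam₂ (i : ℤ)) hfval m]
  refine ⟨?_, ?_, ?_⟩
  · intro hk
    rw [hS' k (le_trans hk hceil12)]
    unfold Eval
    rw [if_neg (show ¬(c < k ∧ Odd (k - c)) by rintro ⟨h', _⟩; omega)]
    omega
  · intro hk1 hk2 hev
    rw [hS' k hk2]
    have hev' : Even (k - c) := by
      have h' : ((k - c : ℕ) : ℤ) = (k : ℤ) - c := by omega
      rw [← Int.even_coe_nat, h', hcast]
      exact hev
    unfold Eval
    rw [if_neg (show ¬(c < k ∧ Odd (k - c)) by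
      rintro ⟨_, h'⟩; exact (Nat.not_odd_iff_even.mpr hev') h')]
    omega
  · intro hk1 hk2 hodd
    rw [hS' k hk2]
    have hodd' : Odd (k - c) := by
      rw [Nat.odd_iff, ← Nat.not_even_iff]
      intro h'
      have h'' : ((k - c : ℕ) : ℤ) = (k : ℤ) - c := by omega
      rw [← Int.even_coe_nat, h'', hcast] at h'
      exact (Int.not_odd_iff_even.mpr h') hodd
    unfold Eval
    rw [if_pos ⟨by omega, hodd'⟩]
    have hfl : ⌊lam₂⌋ = ⌈lam₂⌉ - 1 := by
      have := ceil_eq_floor_add_one lam₂ hl2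
      omega
    rw [hfl]
    omega
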